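/- Fix an integer p ≥ 2, and let λ and μ be integral partitions all of whose entries are powers of p. If λ stably embeds into μ (there exists some partition ν with λ×ν ↪ μ×ν), then there exists a partition ν all of whose entries are powers of p such that λ×ν embeds into μ×ν. -/

import Mathlib

/-- An integral partition: a finite (nonempty) multiset of positive integers. -/
def IsPartition (l : Multiset ℕ) : Prop := l ≠ 0 ∧ ∀ x ∈ l, 0 < x

/-- `Embeds l m` : the entries of `l` can be grouped and the groups assigned
bijectively (as a multiset) to the bins of `m`, each group fitting in its bin.
This is the bin-packing embedding `l ↪ m`. -/
def Embeds (l m : Multiset ℕ) : Prop :=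
  ∃ T : Multiset (Multiset ℕ × ℕ),
    (T.map Prod.fst).sum = l ∧ T.map Prod.snd = m ∧ ∀ q ∈ T, q.1.sum ≤ q.2

/-- The product of two partitions: all pairwise products of entries. -/
def mprod (l m : Multiset ℕ) : Multiset ℕ := l.bind fun a => m.map (a * ·)

/-- The `n`-fold product `l^{×n}`. -/
def prodPow (l : Multiset ℕ) : ℕ → Multiset ℕ
  | 0 => {1}
  | n + 1 => mprod l (prodPow l n)

/-- The `p`-norm of a partition: `(∑ λᵢ^p)^(1/p)`. -/
noncomputable def pnorm (l : Multiset ℕ) (p : ℝ) : ℝ :=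
  ((l.map fun a => (a : ℝ) ^ p).sum) ^ (1 / p)

/-- `l ⪯_S m` : for every positive `x`, the sum of the entries of `l` that
are `≥ x` is at most the corresponding sum for `m`. -/
def Supermajorized (l m : Multiset ℕ) : Prop :=
  ∀ x : ℕ, 0 < x →
    ((l.filter fun a => x ≤ a).sum ≤ (m.filter fun a => x ≤ a).sum)

/-- `l s↪ m` : there is a partition `ν` with `l×ν ↪ m×ν`. -/
def StablyEmbeds (l m : Multiset ℕ) : Prop :=
  ∃ ν : Multiset ℕ, IsPartition ν ∧ Embeds (mprod l ν) (mprod m ν)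

/-- `l b↪ m` : for every rational `ε > 0` there are positive integers `N, M`
with `M ≤ N(1+ε)` and `l^{×N} ↪ m^{×M}`. -/
def BulkEmbeds (l m : Multiset ℕ) : Prop :=
  ∀ ε : ℚ, 0 < ε → ∃ N M : ℕ, 0 < N ∧ 0 < M ∧ (M : ℚ) ≤ (N : ℚ) * (1 + ε) ∧
    Embeds (prodPow l N) (prodPow m M)

-- helper: filter-sum of a sum of multisets
lemma fsum_sum (q : ℕ → Prop) [DecidablePred q] (s : Multiset (Multiset ℕ)) :
    (s.sum.filter q).sum = (s.map fun t => (t.filter q).sum).sum := by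
  induction s using Multiset.induction with
  | empty => simp
  | cons a s ih => simp [Multiset.sum_cons, Multiset.filter_add, ih]

-- helper: filter-sum of a bind
lemma fsum_bind {α : Type*} (q : ℕ → Prop) [DecidablePred q] (s : Multiset α)
    (f : α → Multiset ℕ) :
    ((s.bind f).filter q).sum = (s.map fun a => ((f a).filter q).sum).sum := by
  induction s using Multiset.induction with
  | empty => simp
  | cons a s ih => simp [Multiset.cons_bind, Multiset.filter_add, ih]

-- helper: filter-sum of a map
lemma fsum_map {α : Type*} (q : ℕ → Prop) [DecidablePred q] (s : Multiset α)
    (g : α → ℕ) :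
    (((s.map g).filter q).sum) = (s.map fun a => if q (g a) then g a else 0).sum := by
  induction s using Multiset.induction with
  | empty => simp
  | cons a s ih =>
    by_cases h : q (g a) <;> simp [Multiset.filter_cons, h, ih]

lemma msum_le_msum {s t : Multiset ℕ} (h : s ≤ t) : s.sum ≤ t.sum := by
  obtain ⟨u, rfl⟩ := Multiset.le_iff_exists_add.mp h
  simp

lemma embeds_superm {l m : Multiset ℕ} (h : Embeds l m) : Supermajorized l m := by
  obtain ⟨T, h1, h2, h3⟩ := h
  intro x hx
  rw [← h1, ← h2]
  have e1 : (((T.map Prod.fst).sum).filter (fun a => x ≤ a)).sum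
      = (T.map fun q => ((q.1.filter (fun a => x ≤ a)).sum)).sum := by
    rw [fsum_sum]; rw [Multiset.map_map]; rfl
  have e2 : (((T.map Prod.snd)).filter (fun a => x ≤ a)).sum
      = (T.map fun q => if x ≤ q.2 then q.2 else 0).sum := by
    rw [fsum_map]
  rw [e1, e2]
  apply Multiset.sum_map_le_sum_map
  intro q hq
  by_cases hxb : x ≤ q.2
  · simp only [if_pos hxb]
    calc (q.1.filter (fun a => x ≤ a)).sum ≤ q.1.sum := msum_le_msum (Multiset.filter_le _ _)
    _ ≤ q.2 := h3 q hq
  · simp only [if_neg hxb]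
    have : q.1.filter (fun a => x ≤ a) = 0 := by
      rw [Multiset.filter_eq_nil]
      intro a ha hxa
      exact hxb (le_trans hxa (le_trans (Multiset.le_sum_of_mem ha) (h3 q hq)))
    simp [this]

lemma exists_max (l : Multiset ℕ) (h : l ≠ 0) : ∃ a ∈ l, ∀ c ∈ l, c ≤ a := by
  induction l using Multiset.induction with
  | empty => exact absurd rfl h
  | cons a s ih =>
    rcases eq_or_ne s 0 with rfl | hs
    · exact ⟨a, Multiset.mem_cons_self a 0, by simp⟩
    · obtain ⟨b, hb, hbmax⟩ := ih hs
      rcases le_total a b with hab | hab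
      · exact ⟨b, Multiset.mem_cons_of_mem hb, by
          intro c hc
          rcases Multiset.mem_cons.mp hc with rfl | hc
          · exact hab
          · exact hbmax c hc⟩
      · exact ⟨a, Multiset.mem_cons_self a s, by
          intro c hc
          rcases Multiset.mem_cons.mp hc with rfl | hc
          · exact le_rfl
          · exact le_trans (hbmax c hc) hab⟩

lemma split_map {α β : Type*} [DecidableEq α] [DecidableEq β] (f : α → β) :
    ∀ (u : Multiset β) (v : Multiset β) (s : Multiset α), s.map f = u + v →
      ∃ s₁ s₂ : Multiset α, s = s₁ + s₂ ∧ s₁.map f = u ∧ s₂.map f = v := by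
  intro u
  induction u using Multiset.induction with
  | empty => intro v s h; exact ⟨0, s, by simp, by simp, by simpa using h⟩
  | cons x u ih =>
    intro v s h
    have hx : x ∈ s.map f := by
      rw [h]; exact Multiset.mem_add.mpr (Or.inl (Multiset.mem_cons_self _ _))
    obtain ⟨a, ha, hfa⟩ := Multiset.mem_map.mp hx
    have hs : a ::ₘ s.erase a = s := Multiset.cons_erase ha
    have h2 : (s.erase a).map f = u + v := by
      have : (a ::ₘ s.erase a).map f = x ::ₘ (u + v) := by rw [hs, h, Multiset.cons_add]
      rw [Multiset.map_cons, hfa] at this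
      exact (Multiset.cons_inj_right x).mp this
    obtain ⟨s₁, s₂, hsplit, h1, h2'⟩ := ih v (s.erase a) h2
    exact ⟨a ::ₘ s₁, s₂, by rw [← hs, hsplit, Multiset.cons_add],
      by rw [Multiset.map_cons, hfa, h1], h2'⟩

lemma geom_fill {p : ℕ} (hp : 2 ≤ p) : ∀ j i : ℕ, i ≤ j →
    p ^ i + ((Finset.Ico i j).sum fun t => (p - 1) * p ^ t) = p ^ j := by
  intro j
  induction j with
  | zero => intro i hi; interval_cases i; simp
  | succ j ih =>
    intro i hi
    rcases Nat.lt_or_ge i (j+1) with h | h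
    · have hij : i ≤ j := by omega
      rw [Finset.sum_Ico_succ_top hij]
      have := ih i hij
      have hpj : (p - 1) * p ^ j + p ^ j = p ^ (j+1) := by
        have : (p - 1) * p ^ j + p ^ j = ((p-1)+1) * p ^ j := by ring
        rw [this, Nat.sub_add_cancel (by omega), pow_succ, mul_comm]
      omega
    · have : i = j + 1 := by omega
      subst this; simp

-- sum of a sum of multisets
lemma sum_sum (s : Multiset (Multiset ℕ)) : s.sum.sum = (s.map Multiset.sum).sum := by
  induction s using Multiset.induction with
  | empty => simp
  | cons a s ih => simp [ih]

lemma superm_embeds (p : ℕ) (hp : 2 ≤ p) :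
    ∀ (n : ℕ) (l m : Multiset ℕ), Multiset.card l = n →
      (∀ x ∈ l, ∃ i, x = p ^ i) → (∀ x ∈ m, ∃ i, x = p ^ i) →
      Supermajorized l m → Embeds l m := by
  intro n
  induction n with
  | zero =>
    intro l m hcard _ _ _
    rw [Multiset.card_eq_zero] at hcard
    subst hcard
    refine ⟨m.map fun b => (0, b), ?_, ?_, ?_⟩
    · rw [Multiset.map_map]
      exact Multiset.sum_eq_zero (by intro x hx; simpa using (Multiset.mem_map.mp hx).imp (fun _ h => h.2.symm) |>.choose_spec)
    · rw [Multiset.map_map]; simp [Function.comp]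
    · intro q hq
      obtain ⟨b, _, rfl⟩ := Multiset.mem_map.mp hq
      simp
  | succ n ih =>
    intro l m hcard hlp hmp hsm
    have hl0 : l ≠ 0 := by intro h; rw [h] at hcard; simp at hcard
    obtain ⟨a, ha, hamax⟩ := exists_max l hl0
    obtain ⟨i, rfl⟩ := hlp a ha
    have hppos : 0 < p := by omega
    have hapos : 0 < p ^ i := pow_pos hppos i
    -- find a bin b ≥ a
    have hfa : p ^ i ≤ (m.filter fun c => p ^ i ≤ c).sum := by
      have h1 := hsm (p ^ i) hapos
      have : p ^ i ≤ (l.filter fun c => p ^ i ≤ c).sum :=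
        Multiset.le_sum_of_mem (Multiset.mem_filter.mpr ⟨ha, le_rfl⟩)
      omega
    have hfne : (m.filter fun c => p ^ i ≤ c) ≠ 0 := by
      intro h; rw [h] at hfa; simp at hfa; omega
    obtain ⟨b, hbf⟩ := Multiset.exists_mem_of_ne_zero hfne
    have hb : b ∈ m := (Multiset.mem_filter.mp hbf).1
    have hab : p ^ i ≤ b := (Multiset.mem_filter.mp hbf).2
    obtain ⟨j, rfl⟩ := hmp b hb
    have hij : i ≤ j := by
      by_contra hc
      push_neg at hc
      exact absurd hab (by simpa using Nat.pow_lt_pow_right (by omega) hc)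
    -- digit multiset of b - a
    set d : Multiset ℕ := (Finset.Ico i j).val.bind fun t => Multiset.replicate (p-1) (p^t)
      with hd_def
    have hd_sum : p ^ i + d.sum = p ^ j := by
      rw [hd_def, Multiset.sum_bind]
      have he : ((Finset.Ico i j).val.map fun t => (Multiset.replicate (p-1) (p^t)).sum)
          = ((Finset.Ico i j).val.map fun t => (p - 1) * p ^ t) := by
        apply Multiset.map_congr rfl
        intro t _
        rw [Multiset.sum_replicate, smul_eq_mul]
      rw [he, ← Finset.sum_eq_multiset_sum]
      exact geom_fill hp j i hij
    have hd_mem : ∀ c ∈ d, (∃ t, c = p ^ t) ∧ p ^ i ≤ c := by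
      intro c hc
      rw [hd_def, Multiset.mem_bind] at hc
      obtain ⟨t, ht, hc⟩ := hc
      have := Multiset.eq_of_mem_replicate hc
      subst this
      have ht2 : i ≤ t ∧ t < j := Finset.mem_Ico.mp ht
      exact ⟨⟨t, rfl⟩, Nat.pow_le_pow_right hppos ht2.1⟩
    set l' := l.erase (p ^ i) with hl'_def
    set m' := m.erase (p ^ j) + d with hm'_def
    have hlcons : (p ^ i) ::ₘ l' = l := Multiset.cons_erase ha
    have hmcons : (p ^ j) ::ₘ m.erase (p ^ j) = m := Multiset.cons_erase hb
    have hl'card : Multiset.card l' = n := by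
      rw [hl'_def, Multiset.card_erase_of_mem ha, hcard]; rfl
    have hl'p : ∀ x ∈ l', ∃ t, x = p ^ t := fun x hx => hlp x (Multiset.mem_of_mem_erase hx)
    have hm'p : ∀ x ∈ m', ∃ t, x = p ^ t := by
      intro x hx
      rcases Multiset.mem_add.mp hx with hx | hx
      · exact hmp x (Multiset.mem_of_mem_erase hx)
      · exact (hd_mem x hx).1
    have hsm' : Supermajorized l' m' := by
      intro x hx
      by_cases hxa : x ≤ p ^ i
      · have h1 := hsm x hx
        rw [← hlcons, ← hmcons] at h1
        rw [Multiset.filter_cons, Multiset.filter_cons] at h1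
        rw [if_pos hxa, if_pos (le_trans hxa hab)] at h1
        simp only [Multiset.sum_add, Multiset.sum_singleton] at h1
        have hdx : (d.filter fun c => x ≤ c) = d := by
          rw [Multiset.filter_eq_self]
          exact fun c hc => le_trans hxa (hd_mem c hc).2
        rw [hm'_def, Multiset.filter_add, Multiset.sum_add, hdx]
        omega
      · have : l'.filter (fun c => x ≤ c) = 0 := by
          rw [Multiset.filter_eq_nil]
          intro c hc hxc
          exact hxa (le_trans hxc (by exact absurd (le_trans hxc (hamax c (Multiset.mem_of_mem_erase hc))) (by omega)))
        simp [this]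
    obtain ⟨T', hT1, hT2, hT3⟩ := ih l' m' hl'card hl'p hm'p hsm'
    -- split T' according to m' = m.erase b + d
    obtain ⟨T₁, T₂, hTsplit, hTm, hTd⟩ := split_map Prod.snd (m.erase (p ^ j)) d T' (by rw [hT2, hm'_def])
    refine ⟨((p ^ i) ::ₘ (T₂.map Prod.fst).sum, p ^ j) ::ₘ T₁, ?_, ?_, ?_⟩
    · rw [Multiset.map_cons, Multiset.sum_cons]
      have : (T'.map Prod.fst).sum = (T₁.map Prod.fst).sum + (T₂.map Prod.fst).sum := by
        rw [hTsplit, Multiset.map_add, Multiset.sum_add]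
      rw [hTsplit] at hT1
      rw [Multiset.map_add, Multiset.sum_add] at hT1
      rw [← hlcons]
      rw [Multiset.cons_add]
      congr 1
      rw [add_comm]
      exact hT1
    · rw [Multiset.map_cons, hTm]
      exact hmcons
    · intro q hq
      rcases Multiset.mem_cons.mp hq with rfl | hq
      · simp only [Multiset.sum_cons]
        have hsub : ((T₂.map Prod.fst).sum).sum ≤ d.sum := by
          rw [sum_sum, ← hTd, Multiset.map_map]
          apply Multiset.sum_map_le_sum_map
          intro q hq2
          exact hT3 q (by rw [hTsplit]; exact Multiset.mem_add.mpr (Or.inr hq2))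
        omega
      · exact hT3 q (by rw [hTsplit]; exact Multiset.mem_add.mpr (Or.inl hq))

-- filter-sum of a replicate
lemma fsum_replicate (q : ℕ → Prop) [DecidablePred q] (n c : ℕ) :
    ((Multiset.replicate n c).filter q).sum = if q c then n * c else 0 := by
  by_cases h : q c
  · rw [if_pos h, Multiset.filter_eq_self.mpr (fun a ha => by rwa [Multiset.eq_of_mem_replicate ha]),
      Multiset.sum_replicate, smul_eq_mul]
  · rw [if_neg h, Multiset.filter_eq_nil.mpr (fun a ha hq => h (by rwa [Multiset.eq_of_mem_replicate ha] at hq))]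
    rfl

-- key numeric equivalence
lemma cond_iff {p : ℕ} (hp : 2 ≤ p) (i k : ℕ) {b : ℕ} (hb : 0 < b) :
    (p ^ k ≤ p ^ i * p ^ Nat.log p b ↔ p ^ k ≤ p ^ i * b) := by
  constructor
  · intro h
    exact le_trans h (Nat.mul_le_mul_left _ (Nat.pow_log_le_self p hb.ne'))
  · intro h
    have h1 : p ^ i * b < p ^ (i + (Nat.log p b + 1)) := by
      rw [pow_add]
      exact (Nat.mul_lt_mul_left (pow_pos (by omega) i)).mpr (Nat.lt_pow_succ_log_self (by omega) b)
    have h2 : p ^ k < p ^ (i + (Nat.log p b + 1)) := lt_of_le_of_lt h h1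
    have h3 : k < i + (Nat.log p b + 1) := by
      by_contra hc
      push_neg at hc
      exact absurd (Nat.pow_le_pow_right (by omega) hc) (Nat.not_le.mpr h2)
    calc p ^ k ≤ p ^ (i + Nat.log p b) := Nat.pow_le_pow_right (by omega) (by omega)
    _ = p ^ i * p ^ Nat.log p b := pow_add p i _

-- the key scaling identity
lemma key_identity {p : ℕ} (hp : 2 ≤ p) (ν : Multiset ℕ) (hν : ∀ b ∈ ν, 0 < b)
    (M : ℕ) (hM : ∀ b ∈ ν, Nat.log p b ≤ M)
    (w : Multiset ℕ) (hw : ∀ a ∈ w, ∃ i, a = p ^ i) (k : ℕ) :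
    ((mprod w (ν.bind fun b =>
        Multiset.replicate (b * p ^ (M - Nat.log p b)) (p ^ Nat.log p b))).filter
        fun c => p ^ k ≤ c).sum
      = p ^ M * ((mprod w ν).filter fun c => p ^ k ≤ c).sum := by
  unfold mprod
  rw [fsum_bind, fsum_bind]
  have : (w.map fun a => (((ν.bind fun b =>
      Multiset.replicate (b * p ^ (M - Nat.log p b)) (p ^ Nat.log p b)).map (a * ·)).filter
      fun c => p ^ k ≤ c).sum)
      = w.map fun a => p ^ M * (((ν.map (a * ·)).filter fun c => p ^ k ≤ c).sum) := by
    apply Multiset.map_congr rfl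
    intro a haw
    obtain ⟨i, rfl⟩ := hw a haw
    rw [Multiset.map_bind, fsum_bind, fsum_map]
    rw [← Multiset.sum_map_mul_left]
    apply congrArg Multiset.sum
    apply Multiset.map_congr rfl
    intro b hbν
    rw [Multiset.map_replicate, fsum_replicate]
    rw [if_congr (cond_iff hp i k (hν b hbν)) rfl rfl]
    by_cases h : p ^ k ≤ p ^ i * b
    · rw [if_pos h, if_pos h]
      have : b * p ^ (M - Nat.log p b) * (p ^ i * p ^ Nat.log p b)
          = (p ^ (M - Nat.log p b) * p ^ Nat.log p b) * (p ^ i * b) := by ring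
      rw [this, ← pow_add, Nat.sub_add_cancel (hM b hbν)]
    · rw [if_neg h, if_neg h, mul_zero]
  rw [this, Multiset.sum_map_mul_left]


/-- For partitions whose entries are powers of a fixed `p ≥ 2`, if `λ s↪ μ`
then the auxiliary partition `ν` can be chosen with all entries powers of `p`. -/
theorem stmt_12 (p : ℕ) (hp : 2 ≤ p) (l m : Multiset ℕ)
    (hl : IsPartition l) (hm : IsPartition m)
    (hlp : ∀ x ∈ l, ∃ i : ℕ, x = p ^ i) (hmp : ∀ x ∈ m, ∃ i : ℕ, x = p ^ i)
    (hs : StablyEmbeds l m) :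
    ∃ ν : Multiset ℕ, IsPartition ν ∧ (∀ x ∈ ν, ∃ i : ℕ, x = p ^ i) ∧
      Embeds (mprod l ν) (mprod m ν) := by
  obtain ⟨ν, ⟨hν0, hνpos⟩, hνemb⟩ := hs
  have hsup := embeds_superm hνemb
  set M := Nat.log p ν.sum with hM_def
  have hM : ∀ b ∈ ν, Nat.log p b ≤ M := fun b hb =>
    Nat.log_mono_right (Multiset.le_sum_of_mem hb)
  set ν₀ := ν.bind fun b =>
      Multiset.replicate (b * p ^ (M - Nat.log p b)) (p ^ Nat.log p b) with hν₀def
  have hν₀p : ∀ x ∈ ν₀, ∃ t, x = p ^ t := by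
    intro x hx
    rw [hν₀def, Multiset.mem_bind] at hx
    obtain ⟨b, hb, hx⟩ := hx
    exact ⟨_, Multiset.eq_of_mem_replicate hx⟩
  have hν₀ne : ν₀ ≠ 0 := by
    obtain ⟨b, hb⟩ := Multiset.exists_mem_of_ne_zero hν0
    have hmem : p ^ Nat.log p b ∈ ν₀ := by
      rw [hν₀def, Multiset.mem_bind]
      refine ⟨b, hb, Multiset.mem_replicate.mpr ⟨?_, rfl⟩⟩
      have hbp := hνpos b hb
      have := pow_pos (show 0 < p by omega) (M - Nat.log p b)
      positivity
    intro h
    rw [h] at hmem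
    simp at hmem
  have hlν₀ : ∀ x ∈ mprod l ν₀, ∃ t, x = p ^ t := by
    intro x hx
    rw [mprod, Multiset.mem_bind] at hx
    obtain ⟨a, ha, hx⟩ := hx
    obtain ⟨c, hc, rfl⟩ := Multiset.mem_map.mp hx
    obtain ⟨i, rfl⟩ := hlp a ha
    obtain ⟨t, rfl⟩ := hν₀p c hc
    exact ⟨i + t, (pow_add p i t).symm⟩
  have hmν₀ : ∀ x ∈ mprod m ν₀, ∃ t, x = p ^ t := by
    intro x hx
    rw [mprod, Multiset.mem_bind] at hx
    obtain ⟨a, ha, hx⟩ := hx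
    obtain ⟨c, hc, rfl⟩ := Multiset.mem_map.mp hx
    obtain ⟨i, rfl⟩ := hmp a ha
    obtain ⟨t, rfl⟩ := hν₀p c hc
    exact ⟨i + t, (pow_add p i t).symm⟩
  refine ⟨ν₀, ⟨hν₀ne, fun x hx => ?_⟩, hν₀p, ?_⟩
  · obtain ⟨t, rfl⟩ := hν₀p x hx
    exact pow_pos (by omega) t
  · apply superm_embeds p hp (Multiset.card (mprod l ν₀)) _ _ rfl hlν₀ hmν₀
    intro x hx
    set k := Nat.clog p x with hk_def
    have hfc : ∀ (w : Multiset ℕ), (∀ c ∈ w, ∃ t, c = p ^ t) →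
        w.filter (fun a => x ≤ a) = w.filter (fun a => p ^ k ≤ a) := by
      intro w hw
      apply Multiset.filter_congr
      intro c hc
      obtain ⟨t, rfl⟩ := hw c hc
      rw [← Nat.clog_le_iff_le_pow (show 1 < p by omega),
        Nat.pow_le_pow_iff_right (show 1 < p by omega)]
    rw [hfc _ hlν₀, hfc _ hmν₀, hν₀def,
      key_identity hp ν hνpos M hM l hlp k,
      key_identity hp ν hνpos M hM m hmp k]
    exact Nat.mul_le_mul_left _ (hsup (p ^ k) (pow_pos (by omega) k))
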